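/- For set functions g₁, …, g_t from 2^U to a commutative ring R, the zeta transform of their cover product equals the pointwise product of their zeta transforms: for every X ⊆ U, (ξ(g₁ ∗_c g₂ ∗_c ⋯ ∗_c g_t))(X) = (ξg₁)(X) · (ξg₂)(X) ⋯ (ξg_t)(X). -/

import Mathlib

/-- The zeta transform of the cover product of set functions `g₁, …, g_t` equals the
pointwise product of their zeta transforms. -/
theorem zeta_cover_product {U R : Type*} [Fintype U] [DecidableEq U] [CommRing R]
    (t : ℕ) (g : Fin t → Finset U → R) (X : Finset U) :
    ∑ Y ∈ X.powerset,
      ∑ Xs ∈ (Finset.univ : Finset (Fin t → Finset U)).filter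
          (fun Xs => Finset.univ.biUnion Xs = Y),
        ∏ j, g j (Xs j)
    = ∏ j, ∑ A ∈ X.powerset, g j A := by
  rw [Finset.prod_univ_sum]
  have h1 : ∀ Y ∈ X.powerset,
      (Finset.univ : Finset (Fin t → Finset U)).filter
          (fun Xs => Finset.univ.biUnion Xs = Y)
      = (Fintype.piFinset (fun _ : Fin t => X.powerset)).filter
          (fun Xs => Finset.univ.biUnion Xs = Y) := by
    intro Y hY
    rw [Finset.mem_powerset] at hY
    ext Xs
    simp only [Finset.mem_filter, Finset.mem_univ, true_and, Fintype.mem_piFinset,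
      Finset.mem_powerset]
    constructor
    · intro h
      refine ⟨fun j => ?_, h⟩
      exact (Finset.subset_biUnion_of_mem Xs (Finset.mem_univ j)).trans (h ▸ hY)
    · exact fun h => h.2
  rw [Finset.sum_congr rfl (fun Y hY => by rw [h1 Y hY])]
  apply Finset.sum_fiberwise_of_maps_to
  intro Xs hXs
  rw [Fintype.mem_piFinset] at hXs
  rw [Finset.mem_powerset, Finset.biUnion_subset]
  exact fun j _ => Finset.mem_powerset.mp (hXs j)
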